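/- Let Q(·) be a quasigroup and Q(∘) a loop with identity 1 on the same set Q, isotopic via γ(x·y) = α(x)∘β(y) for bijections α, β, γ of Q. Let (φ_i) be the tracks of Q(·) and (ψ_i) the tracks of Q(∘). If φ_p ∘ φ_i⁻¹ ∘ φ_p = φ_{σ(i)} holds for all i ∈ Q, where p = γ⁻¹(1) and σ = γ⁻¹ ∘ ψ₁ ∘ γ, then Q(∘) is a D-loop. -/

import Mathlib

/-- Let a quasigroup `Q(·)` with tracks `φ` and a loop `Q(∘)`
with identity `oneo` and tracks `ψ` be isotopic via bijections `α, β, γ` with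
`γ(x·y) = α(x) ∘ β(y)`. If `φ_p ∘ φ_i⁻¹ ∘ φ_p = φ_{σ(i)}` holds for all `i`,
where `p = γ⁻¹(1)` and `σ = γ⁻¹ ∘ ψ₁ ∘ γ`, then `Q(∘)` is a D-loop (its right
loop-inverse map is `ψ₁` and it satisfies the antiautomorphic inverse
property). -/
theorem stmt_17 {Q : Type*} (mul : Q → Q → Q)
    (hL : ∀ a, Function.Bijective (fun x => mul a x))
    (hR : ∀ a, Function.Bijective (fun x => mul x a))
    (φ : Q → Equiv.Perm Q) (hφ : ∀ a x, mul x (φ a x) = a)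
    (op : Q → Q → Q) (oneo : Q)
    (hopone_l : ∀ x, op oneo x = x) (hopone_r : ∀ x, op x oneo = x)
    (hopL : ∀ c, Function.Bijective (fun x => op c x))
    (hopR : ∀ c, Function.Bijective (fun x => op x c))
    (ψ : Q → Equiv.Perm Q) (hψ : ∀ a x, op x (ψ a x) = a)
    (α β γ : Q ≃ Q)
    (hiso : ∀ x y, γ (mul x y) = op (α x) (β y))
    (hmain : ∀ i, φ (γ.symm oneo) * (φ i)⁻¹ * φ (γ.symm oneo) =
      φ (γ.symm (ψ oneo (γ i)))) :
    ∀ x y, ψ oneo (op x y) = op (ψ oneo y) (ψ oneo x) := by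
  have ψdet : ∀ a x t, op x t = a → ψ a x = t := fun a x t h =>
    (hopL x).1 ((hψ a x).trans h.symm)
  have φdet : ∀ a x t, mul x t = a → φ a x = t := fun a x t h =>
    (hL x).1 ((hφ a x).trans h.symm)
  have φform : ∀ a x, φ a x = β.symm (ψ (γ a) (α x)) := by
    intro a x
    apply φdet
    apply γ.injective
    rw [hiso, Equiv.apply_symm_apply]
    exact hψ (γ a) (α x)
  have J1 : ψ oneo oneo = oneo := ψdet oneo oneo oneo (hopone_l oneo)
  have star : ∀ u v, op u (ψ oneo v) = ψ oneo (op v (ψ oneo u)) := by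
    intro u v
    set a := op v (ψ oneo u) with ha
    have h1 : ψ a v = ψ oneo u := ψdet a v (ψ oneo u) rfl
    set i := γ.symm a with hi
    set p := γ.symm oneo with hp
    set x := α.symm u with hxdef
    have hγi : γ i = a := γ.apply_symm_apply a
    have hγp : γ p = oneo := γ.apply_symm_apply oneo
    have hαx : α x = u := α.apply_symm_apply u
    set x' := (φ i)⁻¹ (φ p x) with hx'
    have hφix' : φ i x' = φ p x := by
      rw [hx']; exact (φ i).apply_symm_apply _
    have hv : α x' = v := by
      have h2 := hφix'
      rw [φform, φform, hγi, hγp, hαx] at h2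
      have h3 : ψ a (α x') = ψ oneo u := β.symm.injective h2
      exact (ψ a).injective (h3.trans h1.symm)
    have hm := congrArg (fun f : Equiv.Perm Q => f x) (hmain i)
    simp only [Equiv.Perm.mul_apply] at hm
    rw [← hx'] at hm
    rw [φform, φform, hγp, hv, hαx, Equiv.apply_symm_apply] at hm
    have h4 : ψ oneo v = ψ (ψ oneo (γ i)) u := β.symm.injective hm
    rw [hγi] at h4
    rw [h4]
    exact hψ (ψ oneo a) u
  have Jinv : ∀ x, ψ oneo (ψ oneo x) = x := by
    intro x
    have h := star x oneo
    rw [J1, hopone_r, hopone_l] at h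
    exact h.symm
  intro x y
  have h := star (ψ oneo y) x
  rw [Jinv] at h
  exact h.symm
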